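/- If L is a set of 0.62·q^3 lines in F_q^3, then the union of the lines of L contains at least (1 − o(1))·0.38·q^3 points. -/

import Mathlib

open scoped Classical

/-- `ℓ` is an (affine) line in `F^3`. -/
def IsLine {F : Type} [Field F] (ℓ : Set (Fin 3 → F)) : Prop :=
  ∃ a b : Fin 3 → F, b ≠ 0 ∧ ℓ = {x | ∃ t : F, x = a + t • b}

open Finset
set_option linter.unusedSectionVars false

namespace Stmt12

variable {F : Type} [Field F] [Fintype F]

/-- explicit dot product on `Fin 3 → F`. -/
def dot (w x : Fin 3 → F) : F := w 0 * x 0 + w 1 * x 1 + w 2 * x 2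

/-- the plane with normal `w` and level `c`. -/
def Pl (w : Fin 3 → F) (c : F) : Set (Fin 3 → F) := {x | dot w x = c}

/-- the line through `a` with direction `b` -/
def lineS (a b : Fin 3 → F) : Set (Fin 3 → F) := {x | ∃ t : F, x = a + t • b}

lemma mem_lineS {a b x : Fin 3 → F} : x ∈ lineS a b ↔ ∃ t : F, x = a + t • b := Iff.rfl

lemma dot_add_right (w x y : Fin 3 → F) : dot w (x + y) = dot w x + dot w y := by
  simp [dot]; ring

lemma dot_sub_right (w x y : Fin 3 → F) : dot w (x - y) = dot w x - dot w y := by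
  simp [dot]; ring

lemma dot_smul_right (w : Fin 3 → F) (t : F) (x : Fin 3 → F) : dot w (t • x) = t * dot w x := by
  simp [dot, smul_eq_mul]; ring

lemma smul_dot (t : F) (w x : Fin 3 → F) : dot (t • w) x = t * dot w x := by
  simp [dot, smul_eq_mul]; ring

lemma zero_dot (x : Fin 3 → F) : dot 0 x = 0 := by simp [dot]

lemma dot_single (w : Fin 3 → F) (j : Fin 3) (t : F) :
    dot w (t • (Pi.single j (1:F) : Fin 3 → F)) = t * w j := by
  fin_cases j <;> simp [dot, Pi.single_apply] <;> ring

/-- a nonzero function has a nonzero coordinate -/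
lemma exists_ne_zero {b : Fin 3 → F} (hb : b ≠ 0) : ∃ i, b i ≠ 0 := by
  by_contra h
  push_neg at h
  exact hb (funext fun i => h i)

lemma smul_injective {b : Fin 3 → F} (hb : b ≠ 0) :
    Function.Injective (fun t : F => t • b) := by
  obtain ⟨i, hi⟩ := exists_ne_zero hb
  intro t s h
  have := congrFun h i
  simp only [Pi.smul_apply, smul_eq_mul] at this
  exact mul_right_cancel₀ hi this

lemma line_param_injective (a b : Fin 3 → F) (hb : b ≠ 0) :
    Function.Injective (fun t : F => a + t • b) := by
  intro t s h
  simp only [add_right_inj] at h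
  exact smul_injective hb h

/-- a line has exactly `q` points -/
lemma line_card (a b : Fin 3 → F) (hb : b ≠ 0) :
    (univ.filter fun x : Fin 3 → F => x ∈ lineS a b).card = Fintype.card F := by
  have himg : (univ.filter fun x : Fin 3 → F => x ∈ lineS a b)
      = Finset.image (fun t : F => a + t • b) univ := by
    ext x
    simp only [mem_filter, mem_univ, true_and, Finset.mem_image, mem_lineS]
    exact ⟨fun ⟨t, h⟩ => ⟨t, h.symm⟩, fun ⟨t, h⟩ => ⟨t, h.symm⟩⟩
  rw [himg, Finset.card_image_of_injective _ (line_param_injective a b hb), card_univ]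

/-- the line through two distinct points is unique -/
lemma line_eq_of_mem {ℓ : Set (Fin 3 → F)} (h : IsLine ℓ) {p p' : Fin 3 → F}
    (hp : p ∈ ℓ) (hp' : p' ∈ ℓ) (hne : p ≠ p') : ℓ = lineS p (p' - p) := by
  obtain ⟨a, b, hb, rfl⟩ := h
  obtain ⟨s, rfl⟩ := hp
  obtain ⟨s', rfl⟩ := hp'
  have hss : s ≠ s' := by rintro rfl; exact hne rfl
  have hdiff : (a + s' • b) - (a + s • b) = (s' - s) • b := by
    rw [sub_smul]; abel
  ext x
  simp only [lineS, Set.mem_setOf_eq, hdiff]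
  constructor
  · rintro ⟨t, rfl⟩
    refine ⟨(t - s) / (s' - s), ?_⟩
    rw [smul_smul, div_mul_cancel₀ _ (sub_ne_zero.mpr (Ne.symm hss))]
    rw [add_assoc, ← add_smul]
    ring_nf
  · rintro ⟨u, rfl⟩
    refine ⟨s + u * (s' - s), ?_⟩
    rw [smul_smul, add_assoc, ← add_smul]

/-- two distinct lines meet in at most one point -/
lemma two_lines_card {ℓ ℓ' : Set (Fin 3 → F)} (h : IsLine ℓ) (h' : IsLine ℓ')
    (hne : ℓ ≠ ℓ') :
    (univ.filter fun p : Fin 3 → F => p ∈ ℓ ∧ p ∈ ℓ').card ≤ 1 := by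
  rw [Finset.card_le_one]
  intro p hp p' hp'
  simp only [mem_filter, mem_univ, true_and] at hp hp'
  by_contra hpp
  apply hne
  rw [line_eq_of_mem h hp.1 hp'.1 hpp, line_eq_of_mem h' hp.2 hp'.2 hpp]

/-- generic double counting -/
lemma dc {α β : Type*} (D : Finset α) (T : Finset β) (R : α → β → Prop) :
    ∑ d ∈ D, (T.filter (fun t => R d t)).card = ∑ t ∈ T, (D.filter (fun d => R d t)).card := by
  simp_rw [Finset.card_filter]
  exact Finset.sum_comm

/-- a hyperplane determines its normal vector up to scalar -/
lemma normal_unique (w w' : Fin 3 → F) (hw : w ≠ 0)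
    (h : ∀ x, dot w x = 0 → dot w' x = 0) : ∃ lam : F, w' = lam • w := by
  obtain ⟨i, hi⟩ := exists_ne_zero hw
  refine ⟨w' i * (w i)⁻¹, funext fun j => ?_⟩
  have hv : dot w (w i • (Pi.single j (1:F) : Fin 3 → F) - w j • (Pi.single i (1:F) : Fin 3 → F)) = 0 := by
    rw [dot_sub_right, dot_single, dot_single]; ring
  have hv' := h _ hv
  rw [dot_sub_right, dot_single, dot_single] at hv'
  have : w i * w' j = w j * w' i := by linear_combination hv'
  simp only [Pi.smul_apply, smul_eq_mul]
  field_simp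
  linear_combination this

/-- every (affine) plane has exactly `q ^ 2` points -/
lemma plane_card (w : Fin 3 → F) (hw : w ≠ 0) (c : F) :
    (univ.filter fun x : Fin 3 → F => dot w x = c).card = Fintype.card F ^ 2 := by
  obtain ⟨i, hi⟩ := exists_ne_zero hw
  have key : ∀ c c' : F, (univ.filter fun x : Fin 3 → F => dot w x = c).card ≤
      (univ.filter fun x : Fin 3 → F => dot w x = c').card := by
    intro c c'
    apply Finset.card_le_card_of_injOn
      (fun x => x + ((c' - c) * (w i)⁻¹) • (Pi.single i (1:F) : Fin 3 → F))
    · intro x hx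
      simp only [Finset.coe_filter, Set.mem_setOf_eq, mem_univ, true_and] at hx ⊢
      rw [dot_add_right, dot_single, hx]
      field_simp
      ring
    · intro x _ y _ h
      simpa using h
  have heq : ∀ c c' : F, (univ.filter fun x : Fin 3 → F => dot w x = c).card =
      (univ.filter fun x : Fin 3 → F => dot w x = c').card :=
    fun c c' => le_antisymm (key c c') (key c' c)
  have hsum : (univ : Finset (Fin 3 → F)).card =
      ∑ c' ∈ (univ : Finset F), (univ.filter fun x : Fin 3 → F => dot w x = c').card :=
    Finset.card_eq_sum_card_fiberwise (fun x _ => mem_univ _)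
  have hsum2 : ∑ c' ∈ (univ : Finset F), (univ.filter fun x : Fin 3 → F => dot w x = c').card
      = Fintype.card F * (univ.filter fun x : Fin 3 → F => dot w x = c).card := by
    rw [Finset.sum_congr rfl (fun c' _ => heq c' c), Finset.sum_const, card_univ,
      smul_eq_mul]
  have hV : (univ : Finset (Fin 3 → F)).card = Fintype.card F ^ 3 := by
    rw [card_univ, Fintype.card_fun, Fintype.card_fin]
  have hq : 0 < Fintype.card F := Fintype.card_pos
  apply Nat.eq_of_mul_eq_mul_left hq
  rw [← hsum2, ← hsum, hV]; ring

/-- explicit cross product -/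
def cross (b d : Fin 3 → F) : Fin 3 → F := fun i =>
  if i = 0 then b 1 * d 2 - b 2 * d 1
  else if i = 1 then b 2 * d 0 - b 0 * d 2
  else b 0 * d 1 - b 1 * d 0

lemma cross_dot_left (b d : Fin 3 → F) : dot (cross b d) b = 0 := by
  simp [dot, cross]; ring

lemma cross_dot_right (b d : Fin 3 → F) : dot (cross b d) d = 0 := by
  simp [dot, cross]; ring

lemma cross_ne_zero {b d : Fin 3 → F}
    (hind : ∀ s t : F, s • b + t • d = 0 → s = 0 ∧ t = 0) : cross b d ≠ 0 := by
  intro hzero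
  have h01 : b 0 * d 1 = b 1 * d 0 := by
    have := congrFun hzero 2; simp [cross] at this; linear_combination this
  have h12 : b 1 * d 2 = b 2 * d 1 := by
    have := congrFun hzero 0; simp [cross] at this; linear_combination this
  have h02 : b 0 * d 2 = b 2 * d 0 := by
    have := congrFun hzero 1; simp [cross] at this; linear_combination -this
  by_cases hb : b = 0
  · subst hb
    have := hind 1 0 (by simp)
    exact one_ne_zero this.1
  · obtain ⟨i, hi⟩ := exists_ne_zero hb
    have hall : ∀ x y : Fin 3, b x * d y = b y * d x := by
      intro x y
      fin_cases x <;> fin_cases y <;>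
        simp only [Fin.mk_zero, Fin.mk_one, Fin.reduceFinMk, Fin.isValue] <;>
        first
          | rfl
          | exact h01
          | exact h01.symm
          | exact h12
          | exact h12.symm
          | exact h02
          | exact h02.symm
    have hrel : ∀ j : Fin 3, d i * b j - b i * d j = 0 := by
      intro j
      linear_combination hall j i
    have : d i = 0 ∧ (- b i) = 0 := by
      apply hind
      funext j
      simp only [Pi.add_apply, Pi.smul_apply, smul_eq_mul, Pi.zero_apply, neg_mul]
      linear_combination hrel j
    exact hi (neg_eq_zero.mp this.2)

/-- the set of vectors orthogonal to two independent vectors has exactly `q` elements -/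
lemma perp_card (b d : Fin 3 → F)
    (hind : ∀ s t : F, s • b + t • d = 0 → s = 0 ∧ t = 0) :
    (univ.filter fun w : Fin 3 → F => dot w b = 0 ∧ dot w d = 0).card = Fintype.card F := by
  set w₀ := cross b d with hw₀def
  have hw₀ : w₀ ≠ 0 := cross_ne_zero hind
  have hw₀b : dot w₀ b = 0 := cross_dot_left b d
  have hw₀d : dot w₀ d = 0 := cross_dot_right b d
  -- the span of b, d
  have hinj : Function.Injective (fun st : F × F => st.1 • b + st.2 • d) := by
    intro st st' h
    simp only at h
    have : (st.1 - st'.1) • b + (st.2 - st'.2) • d = 0 := by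
      rw [sub_smul, sub_smul]
      rw [sub_add_sub_comm, h, sub_self]
    obtain ⟨h1, h2⟩ := hind _ _ this
    exact Prod.ext (sub_eq_zero.mp h1) (sub_eq_zero.mp h2)
  have hScard : (Finset.image (fun st : F × F => st.1 • b + st.2 • d) univ).card
      = Fintype.card F ^ 2 := by
    rw [Finset.card_image_of_injective _ hinj, card_univ, Fintype.card_prod]; ring
  have hSeq : ∀ w : Fin 3 → F, w ≠ 0 → dot w b = 0 → dot w d = 0 →
      Finset.image (fun st : F × F => st.1 • b + st.2 • d) univ
        = univ.filter fun x : Fin 3 → F => dot w x = 0 := by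
    intro w hw hwb hwd
    apply Finset.eq_of_subset_of_card_le
    · intro x hx
      simp only [Finset.mem_image] at hx
      obtain ⟨st, -, rfl⟩ := hx
      simp only [mem_filter, mem_univ, true_and]
      rw [dot_add_right, dot_smul_right, dot_smul_right, hwb, hwd]; ring
    · rw [plane_card w hw 0, hScard]
  have hK : (univ.filter fun w : Fin 3 → F => dot w b = 0 ∧ dot w d = 0)
      = Finset.image (fun t : F => t • w₀) univ := by
    ext w
    simp only [mem_filter, mem_univ, true_and, Finset.mem_image]
    constructor
    · rintro ⟨hwb, hwd⟩
      by_cases hw : w = 0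
      · exact ⟨0, by simp [hw]⟩
      · have h1 := hSeq w hw hwb hwd
        have h2 := hSeq w₀ hw₀ hw₀b hw₀d
        have hplanes : ∀ x, dot w x = 0 → dot w₀ x = 0 := by
          intro x hx
          have : x ∈ univ.filter fun x : Fin 3 → F => dot w₀ x = 0 := by
            rw [← h2, h1]
            simp only [mem_filter, mem_univ, true_and]; exact hx
          simpa using this
        obtain ⟨lam, hlam⟩ := normal_unique w w₀ hw hplanes
        have hlamne : lam ≠ 0 := by
          intro h0; rw [h0, zero_smul] at hlam; exact hw₀ hlam
        refine ⟨lam⁻¹, ?_⟩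
        rw [hlam, smul_smul, inv_mul_cancel₀ hlamne, one_smul]
    · rintro ⟨t, -, rfl⟩
      constructor
      · rw [smul_dot, hw₀b, mul_zero]
      · rw [smul_dot, hw₀d, mul_zero]
  rw [hK, Finset.card_image_of_injective _ (smul_injective hw₀), card_univ]

lemma mem_Pl {w x : Fin 3 → F} {c : F} : x ∈ Pl w c ↔ dot w x = c := Iff.rfl

lemma Pl_card (w : Fin 3 → F) (hw : w ≠ 0) (c : F) :
    (univ.filter fun x : Fin 3 → F => x ∈ Pl w c).card = Fintype.card F ^ 2 := by
  have := plane_card w hw c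
  convert this using 2
  exact Finset.filter_congr (fun x _ => mem_Pl)

lemma line_sub_iff (a b w : Fin 3 → F) (c : F) :
    lineS a b ⊆ Pl w c ↔ (dot w b = 0 ∧ dot w a = c) := by
  constructor
  · intro h
    have ha : a ∈ lineS a b := ⟨0, by rw [zero_smul, add_zero]⟩
    have hab : a + b ∈ lineS a b := ⟨1, by rw [one_smul]⟩
    have h1 : dot w a = c := h ha
    have h2 : dot w (a + b) = c := h hab
    rw [dot_add_right, h1] at h2
    exact ⟨by linear_combination h2, h1⟩
  · rintro ⟨h1, h2⟩ x ⟨t, rfl⟩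
    show dot w (a + t • b) = c
    rw [dot_add_right, dot_smul_right, h1, h2, mul_zero, add_zero]

lemma indep_of_not_mem {a b x : Fin 3 → F} (hb : b ≠ 0) (hx : x ∉ lineS a b) :
    ∀ s t : F, s • b + t • (x - a) = 0 → s = 0 ∧ t = 0 := by
  intro s t h
  by_cases ht : t = 0
  · subst ht
    rw [zero_smul, add_zero] at h
    rcases smul_eq_zero.mp h with hs | hb'
    · exact ⟨hs, rfl⟩
    · exact absurd hb' hb
  · exfalso
    apply hx
    refine ⟨-(t⁻¹ * s), ?_⟩
    have hxa : x - a = -(t⁻¹ * s) • b := by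
      have : t • (x - a) = -(s • b) := by
        rw [eq_neg_iff_add_eq_zero, add_comm]; exact h
      calc x - a = t⁻¹ • (t • (x - a)) := by rw [smul_smul, inv_mul_cancel₀ ht, one_smul]
      _ = t⁻¹ • (-(s • b)) := by rw [this]
      _ = -(t⁻¹ * s) • b := by rw [smul_neg, smul_smul, neg_smul]
    rw [← hxa]
    abel

/-- the number of (weighted) planes containing a given line and a given point off it -/
lemma pair_count {a b x : Fin 3 → F} (hb : b ≠ 0) (hx : x ∉ lineS a b) :
    (((univ.filter (fun w : Fin 3 → F => w ≠ 0)) ×ˢ (univ : Finset F)).filter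
      (fun wc => lineS a b ⊆ Pl wc.1 wc.2 ∧ x ∈ Pl wc.1 wc.2)).card
      = Fintype.card F - 1 := by
  have hind := indep_of_not_mem hb hx
  have hKfull : (univ.filter fun w : Fin 3 → F => dot w b = 0 ∧ dot w (x - a) = 0).card
      = Fintype.card F := perp_card b (x - a) hind
  have h0mem : (0 : Fin 3 → F) ∈ univ.filter
      (fun w : Fin 3 → F => dot w b = 0 ∧ dot w (x - a) = 0) := by
    simp [zero_dot]
  rw [← hKfull, ← Finset.card_erase_of_mem h0mem]
  apply Finset.card_bij (fun wc _ => wc.1)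
  · rintro ⟨w, c⟩ hwc
    simp only [Finset.mem_filter, Finset.mem_product, mem_univ, and_true, true_and] at hwc
    obtain ⟨hw0, hsub, hxpl⟩ := hwc
    rw [line_sub_iff] at hsub
    rw [Finset.mem_erase]
    refine ⟨hw0, ?_⟩
    simp only [mem_filter, mem_univ, true_and]
    refine ⟨hsub.1, ?_⟩
    rw [dot_sub_right, hsub.2, mem_Pl.mp hxpl, sub_self]
  · rintro ⟨w, c⟩ hwc ⟨w', c'⟩ hwc' h
    simp only at h
    subst h
    simp only [Finset.mem_filter, Finset.mem_product, mem_univ, and_true, true_and] at hwc hwc'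
    have e1 : dot w a = c := ((line_sub_iff a b w c).mp hwc.2.1).2
    have e2 : dot w a = c' := ((line_sub_iff a b w c').mp hwc'.2.1).2
    rw [Prod.mk.injEq]
    exact ⟨rfl, e1 ▸ e2 ▸ rfl⟩
  · intro w hw
    rw [Finset.mem_erase, mem_filter] at hw
    obtain ⟨hw0, -, hwb, hwxa⟩ := hw
    refine ⟨(w, dot w a), ?_, rfl⟩
    simp only [Finset.mem_filter, Finset.mem_product, mem_univ, and_true, true_and]
    refine ⟨hw0, (line_sub_iff a b w _).mpr ⟨hwb, rfl⟩, ?_⟩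
    rw [mem_Pl]
    rw [dot_sub_right, sub_eq_zero] at hwxa
    exact hwxa

lemma card_nonzero : (univ.filter fun w : Fin 3 → F => w ≠ 0).card
    = Fintype.card F ^ 3 - 1 := by
  rw [Finset.filter_ne', Finset.card_erase_of_mem (mem_univ _), card_univ,
    Fintype.card_fun, Fintype.card_fin]

/-- the number of (weighted) planes through a point -/
lemma point_count (u : Fin 3 → F) :
    (((univ.filter (fun w : Fin 3 → F => w ≠ 0)) ×ˢ (univ : Finset F)).filter
      (fun wc => u ∈ Pl wc.1 wc.2)).card = Fintype.card F ^ 3 - 1 := by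
  rw [← card_nonzero]
  apply Finset.card_bij (fun wc _ => wc.1)
  · rintro ⟨w, c⟩ hwc
    simp only [Finset.mem_filter, Finset.mem_product, mem_univ, and_true, true_and] at hwc
    simp only [mem_filter, mem_univ, true_and]
    exact hwc.1
  · rintro ⟨w, c⟩ hwc ⟨w', c'⟩ hwc' h
    simp only at h
    subst h
    simp only [Finset.mem_filter, Finset.mem_product, mem_univ, and_true, true_and] at hwc hwc'
    rw [Prod.mk.injEq]
    exact ⟨rfl, (mem_Pl.mp hwc.2) ▸ (mem_Pl.mp hwc'.2) ▸ rfl⟩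
  · intro w hw
    simp only [mem_filter, mem_univ, true_and] at hw
    refine ⟨(w, dot w u), ?_, rfl⟩
    simp only [Finset.mem_filter, Finset.mem_product, mem_univ, and_true, true_and]
    exact ⟨hw, mem_Pl.mpr rfl⟩

/-- key per-plane inequality, from Cauchy–Schwarz in the plane -/
lemma plane_ineq (L : Finset (Set (Fin 3 → F))) (hL : ∀ ℓ ∈ L, IsLine ℓ)
    (w : Fin 3 → F) (hw : w ≠ 0) (c : F) (Y : Finset (Fin 3 → F))
    (hYPl : ∀ y ∈ Y, y ∈ Pl w c) (hY : ∀ y ∈ Y, ∀ ℓ ∈ L, y ∉ ℓ) :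
    (L.filter (fun ℓ => ℓ ⊆ Pl w c)).card * Y.card
      ≤ Fintype.card F *
        (univ.filter (fun p : Fin 3 → F => ∃ ℓ ∈ L.filter (fun ℓ => ℓ ⊆ Pl w c), p ∈ ℓ)).card := by
  classical
  set q := Fintype.card F with hqdef
  set Lp := L.filter (fun ℓ => ℓ ⊆ Pl w c) with hLp
  set S := univ.filter (fun p : Fin 3 → F => ∃ ℓ ∈ Lp, p ∈ ℓ) with hS
  set l := Lp.card with hl
  rcases Nat.eq_zero_or_pos l with hl0 | hlpos
  · rw [hl0, zero_mul]; exact Nat.zero_le _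
  set t : (Fin 3 → F) → ℕ := fun p => (Lp.filter (fun ℓ => p ∈ ℓ)).card with ht
  have hLine : ∀ ℓ ∈ Lp, (univ.filter (fun p : Fin 3 → F => p ∈ ℓ)).card = q := by
    intro ℓ hℓ
    obtain ⟨a, b, hb, rfl⟩ := hL ℓ (Finset.mem_of_mem_filter ℓ hℓ)
    exact line_card a b hb
  have hSfilt : ∀ ℓ ∈ Lp, S.filter (fun p => p ∈ ℓ) = univ.filter (fun p : Fin 3 → F => p ∈ ℓ) := by
    intro ℓ hℓ
    ext p
    simp only [hS, Finset.filter_filter, mem_filter, mem_univ, true_and]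
    exact ⟨fun h => h.2, fun h => ⟨⟨ℓ, hℓ, h⟩, h⟩⟩
  have h1 : ∑ p ∈ S, t p = l * q := by
    rw [ht]
    rw [dc S Lp (fun p ℓ => p ∈ ℓ)]
    rw [Finset.sum_congr rfl (fun ℓ hℓ => by rw [hSfilt ℓ hℓ, hLine ℓ hℓ])]
    rw [Finset.sum_const, smul_eq_mul]
  have h2 : ∑ p ∈ S, t p * t p ≤ l * (q + l) := by
    have expand : ∑ p ∈ S, t p * t p = ∑ ℓ ∈ Lp, ∑ p ∈ S.filter (fun p => p ∈ ℓ), t p := by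
      have e1 : ∀ p, t p * t p = ∑ ℓ ∈ Lp, (if p ∈ ℓ then t p else 0) := by
        intro p
        rw [← Finset.sum_filter, Finset.sum_const, smul_eq_mul]
      rw [Finset.sum_congr rfl (fun p _ => e1 p), Finset.sum_comm]
      exact Finset.sum_congr rfl (fun ℓ _ => (Finset.sum_filter _ _).symm)
    rw [expand]
    have hbound : ∀ ℓ ∈ Lp, ∑ p ∈ S.filter (fun p => p ∈ ℓ), t p ≤ q + l := by
      intro ℓ hℓ
      rw [hSfilt ℓ hℓ, ht]
      rw [dc (univ.filter (fun p : Fin 3 → F => p ∈ ℓ)) Lp (fun p ℓ' => p ∈ ℓ')]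
      rw [← Finset.add_sum_erase _ _ hℓ]
      have hterm1 : ((univ.filter (fun p : Fin 3 → F => p ∈ ℓ)).filter (fun p => p ∈ ℓ)).card ≤ q := by
        calc ((univ.filter (fun p : Fin 3 → F => p ∈ ℓ)).filter (fun p => p ∈ ℓ)).card
            ≤ (univ.filter (fun p : Fin 3 → F => p ∈ ℓ)).card := Finset.card_filter_le _ _
        _ = q := hLine ℓ hℓ
      have hterm2 : ∑ ℓ' ∈ Lp.erase ℓ, ((univ.filter (fun p : Fin 3 → F => p ∈ ℓ)).filter (fun p => p ∈ ℓ')).card ≤ l := by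
        calc ∑ ℓ' ∈ Lp.erase ℓ, ((univ.filter (fun p : Fin 3 → F => p ∈ ℓ)).filter (fun p => p ∈ ℓ')).card
            ≤ ∑ _ℓ' ∈ Lp.erase ℓ, 1 := by
              apply Finset.sum_le_sum
              intro ℓ' hℓ'
              rw [Finset.filter_filter]
              exact two_lines_card (hL ℓ (Finset.mem_of_mem_filter ℓ hℓ))
                (hL ℓ' (Finset.mem_of_mem_filter ℓ' (Finset.mem_of_mem_erase hℓ')))
                (Ne.symm (Finset.ne_of_mem_erase hℓ'))
        _ = (Lp.erase ℓ).card := by rw [Finset.sum_const, smul_eq_mul, mul_one]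
        _ ≤ l := Finset.card_erase_le.trans le_rfl
      exact Nat.add_le_add hterm1 hterm2
    calc ∑ ℓ ∈ Lp, ∑ p ∈ S.filter (fun p => p ∈ ℓ), t p ≤ ∑ _ℓ ∈ Lp, (q + l) :=
          Finset.sum_le_sum hbound
    _ = l * (q + l) := by rw [Finset.sum_const, smul_eq_mul]
  -- Cauchy–Schwarz
  have h3 : ((l * q : ℕ) : ℝ) ^ 2 ≤ (S.card : ℝ) * ((l * (q + l) : ℕ) : ℝ) := by
    have hcs := sq_sum_le_card_mul_sum_sq (s := S) (f := fun p => (t p : ℝ))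
    have hsumt : ∑ p ∈ S, (t p : ℝ) = ((l * q : ℕ) : ℝ) := by
      rw [← Nat.cast_sum, h1]
    have hsumsq : ∑ p ∈ S, (t p : ℝ) ^ 2 ≤ ((l * (q + l) : ℕ) : ℝ) := by
      have : ∑ p ∈ S, (t p : ℝ) ^ 2 = ((∑ p ∈ S, t p * t p : ℕ) : ℝ) := by
        rw [Nat.cast_sum]
        exact Finset.sum_congr rfl (fun p _ => by push_cast; ring)
      rw [this]
      exact_mod_cast h2
    calc ((l * q : ℕ) : ℝ) ^ 2 = (∑ p ∈ S, (t p : ℝ)) ^ 2 := by rw [hsumt]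
    _ ≤ (S.card : ℝ) * ∑ p ∈ S, (t p : ℝ) ^ 2 := hcs
    _ ≤ (S.card : ℝ) * ((l * (q + l) : ℕ) : ℝ) := by
        apply mul_le_mul_of_nonneg_left hsumsq (by positivity)
  have h4 : (l * q) ^ 2 ≤ S.card * (l * (q + l)) := by exact_mod_cast h3
  have h6 : l * (q * q) ≤ S.card * (q + l) := by
    refine Nat.le_of_mul_le_mul_left ?_ hlpos
    calc l * (l * (q * q)) = (l * q) ^ 2 := by ring
    _ ≤ S.card * (l * (q + l)) := h4
    _ = l * (S.card * (q + l)) := by ring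
  -- disjointness and size of the plane
  have hsub : Y ∪ S ⊆ univ.filter (fun x : Fin 3 → F => x ∈ Pl w c) := by
    intro p hp
    rcases Finset.mem_union.mp hp with hp | hp
    · simp only [mem_filter, mem_univ, true_and]
      exact hYPl p hp
    · simp only [hS, mem_filter, mem_univ, true_and] at hp ⊢
      obtain ⟨ℓ, hℓ, hpl⟩ := hp
      exact (Finset.mem_filter.mp hℓ).2 hpl
  have hdisj : Disjoint Y S := by
    rw [Finset.disjoint_left]
    intro p hpY hpS
    simp only [hS, mem_filter, mem_univ, true_and] at hpS
    obtain ⟨ℓ, hℓ, hpl⟩ := hpS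
    exact hY p hpY ℓ (Finset.mem_of_mem_filter ℓ hℓ) hpl
  have h7 : Y.card + S.card ≤ q * q := by
    calc Y.card + S.card = (Y ∪ S).card := (Finset.card_union_of_disjoint hdisj).symm
    _ ≤ (univ.filter (fun x : Fin 3 → F => x ∈ Pl w c)).card := Finset.card_le_card hsub
    _ = q ^ 2 := Pl_card w hw c
    _ = q * q := sq q
  -- combine
  have h8 : l * Y.card + l * S.card ≤ S.card * q + S.card * l := by
    calc l * Y.card + l * S.card = l * (Y.card + S.card) := by ring
    _ ≤ l * (q * q) := Nat.mul_le_mul_left l h7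
    _ ≤ S.card * (q + l) := h6
    _ = S.card * q + S.card * l := by ring
  have h8' : l * Y.card + l * S.card ≤ S.card * q + l * S.card := by
    rwa [Nat.mul_comm S.card l] at h8
  have h9 : l * Y.card ≤ S.card * q := Nat.le_of_add_le_add_right h8'
  exact h9.trans_eq (Nat.mul_comm _ _)

/-- the master counting inequality -/
lemma master (L : Finset (Set (Fin 3 → F))) (hL : ∀ ℓ ∈ L, IsLine ℓ) :
    letI U := univ.filter (fun p : Fin 3 → F => ∃ ℓ ∈ L, p ∈ ℓ)
    letI X := univ.filter (fun p : Fin 3 → F => ¬ ∃ ℓ ∈ L, p ∈ ℓ)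
    L.card * X.card * (Fintype.card F - 1)
      ≤ Fintype.card F * (U.card * (Fintype.card F ^ 3 - 1)) := by
  classical
  set U := univ.filter (fun p : Fin 3 → F => ∃ ℓ ∈ L, p ∈ ℓ) with hU
  set X := univ.filter (fun p : Fin 3 → F => ¬ ∃ ℓ ∈ L, p ∈ ℓ) with hX
  set D := (univ.filter (fun w : Fin 3 → F => w ≠ 0)) ×ˢ (univ : Finset F) with hD
  have hXnot : ∀ x ∈ X, ∀ ℓ ∈ L, x ∉ ℓ := by
    intro x hx ℓ hℓ hmem
    rw [hX, mem_filter] at hx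
    exact hx.2 ⟨ℓ, hℓ, hmem⟩
  -- Step A : the left side counted via planes
  have stepA : ∑ wc ∈ D, (L.filter (fun ℓ => ℓ ⊆ Pl wc.1 wc.2)).card
        * (X.filter (fun x => x ∈ Pl wc.1 wc.2)).card
      = L.card * X.card * (Fintype.card F - 1) := by
    have e1 : ∀ wc ∈ D, (L.filter (fun ℓ => ℓ ⊆ Pl wc.1 wc.2)).card
        * (X.filter (fun x => x ∈ Pl wc.1 wc.2)).card
        = ((L ×ˢ X).filter (fun p => p.1 ⊆ Pl wc.1 wc.2 ∧ p.2 ∈ Pl wc.1 wc.2)).card := by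
      intro wc _
      rw [← Finset.card_product]
      congr 1
      ext p
      simp only [Finset.mem_filter, Finset.mem_product]
      tauto
    have e2 : ∀ p ∈ L ×ˢ X,
        (D.filter (fun wc => p.1 ⊆ Pl wc.1 wc.2 ∧ p.2 ∈ Pl wc.1 wc.2)).card
          = Fintype.card F - 1 := by
      rintro ⟨ℓ, x⟩ hp
      obtain ⟨hpL, hpX⟩ := Finset.mem_product.mp hp
      obtain ⟨a, b, hb, hline⟩ := hL ℓ hpL
      have hxl : x ∉ ℓ := hXnot x hpX ℓ hpL
      have hline' : ℓ = lineS a b := hline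
      rw [hline'] at hxl ⊢
      exact pair_count hb hxl
    calc ∑ wc ∈ D, (L.filter (fun ℓ => ℓ ⊆ Pl wc.1 wc.2)).card
          * (X.filter (fun x => x ∈ Pl wc.1 wc.2)).card
        = ∑ wc ∈ D, ((L ×ˢ X).filter
            (fun p => p.1 ⊆ Pl wc.1 wc.2 ∧ p.2 ∈ Pl wc.1 wc.2)).card :=
          Finset.sum_congr rfl e1
    _ = ∑ p ∈ L ×ˢ X, (D.filter
            (fun wc => p.1 ⊆ Pl wc.1 wc.2 ∧ p.2 ∈ Pl wc.1 wc.2)).card := by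
          simp_rw [Finset.card_filter]
          exact Finset.sum_comm
    _ = ∑ _p ∈ L ×ˢ X, (Fintype.card F - 1) := Finset.sum_congr rfl e2
    _ = L.card * X.card * (Fintype.card F - 1) := by
          rw [Finset.sum_const, Finset.card_product, smul_eq_mul]
  -- Step B : per-plane bound
  have stepB : ∀ wc ∈ D, (L.filter (fun ℓ => ℓ ⊆ Pl wc.1 wc.2)).card
        * (X.filter (fun x => x ∈ Pl wc.1 wc.2)).card
      ≤ Fintype.card F * (U.filter (fun u => u ∈ Pl wc.1 wc.2)).card := by
    rintro ⟨w, c⟩ hwc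
    have hw : w ≠ 0 := by
      rw [hD, Finset.mem_product] at hwc
      exact (Finset.mem_filter.mp hwc.1).2
    have hYPl : ∀ y ∈ X.filter (fun x => x ∈ Pl w c), y ∈ Pl w c :=
      fun y hy => (Finset.mem_filter.mp hy).2
    have hY : ∀ y ∈ X.filter (fun x => x ∈ Pl w c), ∀ ℓ ∈ L, y ∉ ℓ :=
      fun y hy => hXnot y (Finset.mem_of_mem_filter y hy)
    refine (plane_ineq L hL w hw c _ hYPl hY).trans ?_
    apply Nat.mul_le_mul_left
    apply Finset.card_le_card
    intro p hp
    simp only [mem_filter, mem_univ, true_and] at hp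
    obtain ⟨ℓ, hℓ, hpl⟩ := hp
    refine Finset.mem_filter.mpr ⟨?_, hℓ.2 hpl⟩
    rw [hU]
    simp only [mem_filter, mem_univ, true_and]
    exact ⟨ℓ, hℓ.1, hpl⟩
  -- Step C : summing the right side
  have stepC : ∑ wc ∈ D, (U.filter (fun u => u ∈ Pl wc.1 wc.2)).card
      = U.card * (Fintype.card F ^ 3 - 1) := by
    have c1 : ∑ wc ∈ D, (U.filter (fun u => u ∈ Pl wc.1 wc.2)).card
        = ∑ u ∈ U, (D.filter (fun wc => u ∈ Pl wc.1 wc.2)).card := by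
      simp_rw [Finset.card_filter]
      exact Finset.sum_comm
    rw [c1, Finset.sum_congr rfl (fun u _ => point_count u), Finset.sum_const, smul_eq_mul]
  calc L.card * X.card * (Fintype.card F - 1)
      = ∑ wc ∈ D, (L.filter (fun ℓ => ℓ ⊆ Pl wc.1 wc.2)).card
        * (X.filter (fun x => x ∈ Pl wc.1 wc.2)).card := stepA.symm
  _ ≤ ∑ wc ∈ D, Fintype.card F * (U.filter (fun u => u ∈ Pl wc.1 wc.2)).card :=
      Finset.sum_le_sum stepB
  _ = Fintype.card F * ∑ wc ∈ D, (U.filter (fun u => u ∈ Pl wc.1 wc.2)).card :=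
      (Finset.mul_sum _ _ _).symm
  _ = Fintype.card F * (U.card * (Fintype.card F ^ 3 - 1)) := by rw [stepC]

end Stmt12

/-- Any `0.62 q^3` lines in `F_q^3` cover at least `(1-o(1)) 0.38 q^3` points. -/
theorem stmt_12 : ∀ ε : ℝ, 0 < ε → ∃ Q : ℕ, ∀ q : ℕ, Q < q →
    ∀ (F : Type) [Field F] [Fintype F], Fintype.card F = q →
    ∀ L : Finset (Set (Fin 3 → F)),
      (∀ ℓ ∈ L, IsLine ℓ) →
      0.62 * (q : ℝ) ^ 3 ≤ L.card →
      (1 - ε) * (0.38 * (q : ℝ) ^ 3)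
        ≤ ((Finset.univ.filter (fun p : Fin 3 → F => ∃ ℓ ∈ L, p ∈ ℓ)).card : ℝ) := by
  intro ε hε
  refine ⟨100, ?_⟩
  intro q hq F _ _ hcard L hLines hN
  classical
  subst hcard
  set U := Finset.univ.filter (fun p : Fin 3 → F => ∃ ℓ ∈ L, p ∈ ℓ) with hU
  set X := Finset.univ.filter (fun p : Fin 3 → F => ¬ ∃ ℓ ∈ L, p ∈ ℓ) with hX
  have key := Stmt12.master L hLines
  have hc1 : 1 ≤ Fintype.card F := Fintype.card_pos
  have hc3 : 1 ≤ Fintype.card F ^ 3 := Nat.one_le_pow 3 _ Fintype.card_pos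
  have hXU : U.card + X.card = Fintype.card F ^ 3 := by
    rw [hU, hX, Finset.card_filter_add_card_filter_not, Finset.card_univ,
      Fintype.card_fun, Fintype.card_fin]
  set Q : ℝ := (Fintype.card F : ℝ) with hQdef
  have hQ : (101 : ℝ) ≤ Q := by
    rw [hQdef]
    exact_mod_cast hq
  have keyR : (L.card : ℝ) * X.card * (Q - 1) ≤ Q * (U.card * (Q ^ 3 - 1)) := by
    have := key
    have hcast := (Nat.cast_le (α := ℝ)).mpr this
    push_cast [Nat.cast_sub hc1, Nat.cast_sub hc3] at hcast
    convert hcast using 2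
  have hXR : (X.card : ℝ) = Q ^ 3 - U.card := by
    have : ((U.card + X.card : ℕ) : ℝ) = ((Fintype.card F ^ 3 : ℕ) : ℝ) := by
      exact_mod_cast congrArg (fun n : ℕ => (n : ℝ)) hXU
    push_cast at this
    linarith
  have hU0 : (0 : ℝ) ≤ (U.card : ℝ) := Nat.cast_nonneg _
  have hQ1 : (1:ℝ) ≤ Q := by linarith
  have hQ3 : (1:ℝ) ≤ Q ^ 3 := one_le_pow₀ hQ1
  by_cases hm : 0.38 * Q ^ 3 ≤ (U.card : ℝ)
  · have h038 : (0:ℝ) ≤ 0.38 * Q ^ 3 := by positivity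
    nlinarith [mul_nonneg hε.le h038]
  · exfalso
    push_neg at hm
    have hx62 : 0.62 * Q ^ 3 ≤ (X.card : ℝ) := by
      rw [hXR]; nlinarith
    have hQpos : (0:ℝ) < Q := by linarith
    have hfin : (0.62 * Q ^ 3) * (0.62 * Q ^ 3) * (Q - 1) ≤ Q * ((0.38 * Q ^ 3) * Q ^ 3) := by
      have lhs_le : (0.62 * Q ^ 3) * (0.62 * Q ^ 3) * (Q - 1)
          ≤ (L.card : ℝ) * X.card * (Q - 1) := by
        have h62 : (0:ℝ) ≤ 0.62 * Q ^ 3 := by positivity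
        have hQm1 : (0:ℝ) ≤ Q - 1 := by linarith
        apply mul_le_mul_of_nonneg_right _ hQm1
        apply mul_le_mul hN hx62 h62 ((le_trans h62 hN).trans' (by linarith))
      have rhs_le : Q * ((U.card : ℝ) * (Q ^ 3 - 1)) ≤ Q * ((0.38 * Q ^ 3) * Q ^ 3) := by
        apply mul_le_mul_of_nonneg_left _ hQpos.le
        apply mul_le_mul hm.le (by linarith) (by linarith) (by positivity)
      exact lhs_le.trans (keyR.trans rhs_le)
    have hQ6 : (0:ℝ) < Q ^ 6 := by positivity
    have h2 : 0.3844 * (Q - 1) ≤ 0.38 * Q := by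
      apply le_of_mul_le_mul_right _ hQ6
      calc 0.3844 * (Q - 1) * Q ^ 6 = (0.62 * Q ^ 3) * (0.62 * Q ^ 3) * (Q - 1) := by ring
      _ ≤ Q * ((0.38 * Q ^ 3) * Q ^ 3) := hfin
      _ = 0.38 * Q * Q ^ 6 := by ring
    linarith
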